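/- Let R be a left DM ring for an ideal I. Then R is I-semiperfect if and only if the left R-module R is an I-supplemented module. -/

import Mathlib

open Submodule Function LinearMap

universe u v w x y

section Defs

variable (R : Type u) [Ring R]

/-- `I` (a left ideal) is a two-sided ideal. -/
def IsTwoSidedI (I : Ideal R) : Prop := ∀ a b : R, a ∈ I → a * b ∈ I

variable {M : Type v} [AddCommGroup M] [Module R M]

/-- `N` is PSD in the submodule `T` of `M` (taking `T = ⊤` gives "PSD in `M`"):
whenever `N + X = T`, there is a projective direct summand `S` of `T` with `S ≤ N`
and `T = S ⊕ X`. -/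
def PSDIn (T N : Submodule R M) : Prop :=
  ∀ X : Submodule R M, X ≤ T → N ⊔ X = T →
    ∃ S : Submodule R M, Module.Projective R S ∧ S ≤ N ∧ S ⊔ X = T ∧ S ⊓ X = ⊥

/-- `M` is PSD for the ideal `I`: every submodule of `IM` is PSD in `M`. -/
def PSDFor (I : Ideal R) (M : Type v) [AddCommGroup M] [Module R M] : Prop :=
  ∀ N : Submodule R M, N ≤ I • (⊤ : Submodule R M) → PSDIn R ⊤ N

/-- `R` is a left PSD ring for `I`: every finitely generated free left `R`-module is PSD for `I`. -/
def PSDRing (I : Ideal R) : Prop :=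
  ∀ (F : Type u) [AddCommGroup F] [Module R F] [Module.Free R F] [Module.Finite R F],
    PSDFor R I F

/-- `f : P → M` is a projective `I`-cover. -/
def IsProjICover (I : Ideal R) {P : Type w} [AddCommGroup P] [Module R P]
    (f : P →ₗ[R] M) : Prop :=
  Surjective f ∧ Module.Projective R P ∧
    LinearMap.ker f ≤ I • (⊤ : Submodule R P) ∧ PSDIn R ⊤ (LinearMap.ker f)

/-- A projective `I`-cover of `M`. -/
structure ProjICover (I : Ideal R) (M : Type v) [AddCommGroup M] [Module R M] where
  P : Type w
  [addP : AddCommGroup P]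
  [modP : Module R P]
  f : P →ₗ[R] M
  cover : IsProjICover R I f

/-- `R` is `I`-semiregular. -/
def ISemiregular (I : Ideal R) : Prop :=
  ∀ a : R, ∃ P Q : Submodule R R, IsCompl P Q ∧ Module.Projective R P ∧
    P ≤ Submodule.span R {a} ∧ Submodule.span R {a} ⊓ Q ≤ I

/-- `R` is `I`-semiperfect. -/
def ISemiperfect (I : Ideal R) : Prop :=
  ∀ K : Submodule R R, ∃ A B : Submodule R R, IsCompl A B ∧ Module.Projective R A ∧
    A ≤ K ∧ K ⊓ B ≤ I

end Defs




section Defs2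

variable (R : Type u) [Ring R]
variable {M : Type v} [AddCommGroup M] [Module R M]

/-- A submodule `S` is small in the submodule `T` (take `T = ⊤` for "small in `M`"). -/
def SmallIn (T S : Submodule R M) : Prop :=
  ∀ X : Submodule R M, X ≤ T → S ⊔ X = T → X = T

/-- `K` is DM in the submodule `T` of `M`: whenever `K + X = T` there is a direct
summand `S` of `T` with `S ≤ K` and `S + X = T`. -/
def DMIn (T K : Submodule R M) : Prop :=
  ∀ X : Submodule R M, X ≤ T → K ⊔ X = T →
    ∃ S : Submodule R M, S ≤ K ∧ (∃ S' : Submodule R M, S ⊔ S' = T ∧ S ⊓ S' = ⊥) ∧ S ⊔ X = T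

/-- `M` is DM for `I`: every submodule of `IM` is DM in `M`. -/
def DMFor (I : Ideal R) (M : Type v) [AddCommGroup M] [Module R M] : Prop :=
  ∀ K : Submodule R M, K ≤ I • (⊤ : Submodule R M) → DMIn R ⊤ K

/-- `R` is a left DM ring for `I`. -/
def DMRing (I : Ideal R) : Prop :=
  ∀ (F : Type u) [AddCommGroup F] [Module R F] [Module.Free R F] [Module.Finite R F],
    DMFor R I F

/-- `M` is an `I`-supplemented module. -/
def ISupplemented (I : Ideal R) (M : Type v) [AddCommGroup M] [Module R M] : Prop :=
  ∀ X : Submodule R M, ∃ Y : Submodule R M, Module.Projective R Y ∧ X ⊔ Y = ⊤ ∧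
    X ⊓ Y ≤ I • Y ∧ DMIn R Y (X ⊓ Y)

/-- `M` is a finitely `I`-supplemented module. -/
def FinISupplemented (I : Ideal R) (M : Type v) [AddCommGroup M] [Module R M] : Prop :=
  ∀ X : Submodule R M, X.FG → ∃ Y : Submodule R M, Module.Projective R Y ∧ X ⊔ Y = ⊤ ∧
    X ⊓ Y ≤ I • Y ∧ DMIn R Y (X ⊓ Y)

/-- `M` is a supplemented module. -/
def Supplemented (M : Type v) [AddCommGroup M] [Module R M] : Prop :=
  ∀ X : Submodule R M, ∃ Y : Submodule R M, X ⊔ Y = ⊤ ∧ SmallIn R Y (X ⊓ Y)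

/-- `M` is an `I`-semiperfect module. -/
def ISemiperfectMod (I : Ideal R) (M : Type v) [AddCommGroup M] [Module R M] : Prop :=
  ∀ K : Submodule R M, ∃ A B : Submodule R M, IsCompl A B ∧ Module.Projective R A ∧
    A ≤ K ∧ K ⊓ B ≤ I • (⊤ : Submodule R M)

/-- The radical of `M`: the intersection of all maximal submodules. -/
def RadM (M : Type v) [AddCommGroup M] [Module R M] : Submodule R M :=
  sInf {N : Submodule R M | IsCoatom N}

/-- The socle of `M`: the sum of all simple submodules. -/
def SocM (M : Type v) [AddCommGroup M] [Module R M] : Submodule R M :=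
  sSup {N : Submodule R M | IsSimpleModule R N}

/-- `P` is locally projective (lifting version). -/
def LocallyProjective (P : Type w) [AddCommGroup P] [Module R P] : Prop :=
  ∀ (A : Type x) (B : Type y) [AddCommGroup A] [Module R A] [AddCommGroup B] [Module R B]
    (g : A →ₗ[R] B) (f : P →ₗ[R] B), Surjective g →
      ∀ P₀ : Submodule R P, P₀.FG → ∃ h : P →ₗ[R] A, ∀ p ∈ P₀, f p = g (h p)

/-- `P` is locally projective (splitting version). -/
def LocallyProjectiveB (P : Type w) [AddCommGroup P] [Module R P] : Prop :=
  ∀ (N : Type x) [AddCommGroup N] [Module R N] (g : N →ₗ[R] P), Surjective g →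
    ∀ P₀ : Submodule R P, P₀.FG → ∃ h : P →ₗ[R] N, ∀ p ∈ P₀, g (h p) = p


/-- A locally projective `I`-cover of `M`. -/
structure LocProjICover (I : Ideal R) (M : Type v) [AddCommGroup M] [Module R M] where
  P : Type w
  [addP : AddCommGroup P]
  [modP : Module R P]
  f : P →ₗ[R] M
  surj : Surjective f
  locProj : LocallyProjective.{u, w, x, y} R P
  ker_le : LinearMap.ker f ≤ I • (⊤ : Submodule R P)
  psd : PSDIn R ⊤ (LinearMap.ker f)

/-- A locally projective cover of `M`. -/
structure LocProjCover (M : Type v) [AddCommGroup M] [Module R M] where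
  P : Type w
  [addP : AddCommGroup P]
  [modP : Module R P]
  f : P →ₗ[R] M
  surj : Surjective f
  locProj : LocallyProjective.{u, w, x, y} R P
  ker_small : SmallIn R ⊤ (LinearMap.ker f)

/-- A projective cover of `M`. -/
structure ProjCover (M : Type v) [AddCommGroup M] [Module R M] where
  P : Type w
  [addP : AddCommGroup P]
  [modP : Module R P]
  f : P →ₗ[R] M
  surj : Surjective f
  proj : Module.Projective R P
  ker_small : SmallIn R ⊤ (LinearMap.ker f)

/-- `M` is self-projective (quasi-projective). -/
def SelfProjective (M : Type v) [AddCommGroup M] [Module R M] : Prop :=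
  ∀ (K : Submodule R M) (f : M →ₗ[R] M ⧸ K), ∃ h : M →ₗ[R] M, K.mkQ ∘ₗ h = f

/-- A projectivity class of `R`-modules (in a fixed universe). -/
def ProjectivityClass
    (Pc : ∀ (N : Type w) [AddCommGroup N] [Module R N], Prop) : Prop :=
  (∀ (N : Type w) [AddCommGroup N] [Module R N], SelfProjective R N → Pc N) ∧
  (∀ (N P : Type w) [AddCommGroup N] [Module R N] [AddCommGroup P] [Module R P]
      (f : P →ₗ[R] N), Surjective f → Module.Projective R P → Pc (P × N) →
        Module.Projective R N)

/-- `Pc` is closed under direct summands. -/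
def ClosedUnderSummands
    (Pc : ∀ (N : Type w) [AddCommGroup N] [Module R N], Prop) : Prop :=
  ∀ (N P : Type w) [AddCommGroup N] [Module R N] [AddCommGroup P] [Module R P],
    Pc P → ∀ (i : N →ₗ[R] P) (p : P →ₗ[R] N), p ∘ₗ i = LinearMap.id → Pc N

/-- A `Pc`-projective `I`-cover of `M`. -/
structure PProjICover (Pc : ∀ (N : Type w) [AddCommGroup N] [Module R N], Prop)
    (I : Ideal R) (M : Type v) [AddCommGroup M] [Module R M] where
  Q : Type w
  [addQ : AddCommGroup Q]
  [modQ : Module R Q]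
  g : Q →ₗ[R] M
  surj : Surjective g
  memP : Pc Q
  ker_le : LinearMap.ker g ≤ I • (⊤ : Submodule R Q)
  psd : PSDIn R ⊤ (LinearMap.ker g)

end Defs2

section Aux

variable {R : Type u} [Ring R]

theorem aux_smul_top (I : Ideal R) (hI : IsTwoSidedI R I) :
    I • (⊤ : Submodule R R) = I := by
  apply le_antisymm
  · exact Submodule.smul_le.2 fun r hr n _ => by
      simpa [smul_eq_mul] using hI r n hr
  · intro i hi
    simpa using Submodule.smul_mem_smul hi (Submodule.mem_top : (1:R) ∈ ⊤)

end Aux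

set_option maxHeartbeats 1000000 in
theorem stmt17 {R : Type u} [Ring R] (I : Ideal R) (hI : IsTwoSidedI R I)
    (hDM : DMRing R I) :
    ISemiperfect R I ↔ ISupplemented R I R := by
  constructor
  · -- I-semiperfect → I-supplemented
    intro hSP X
    obtain ⟨A, B, hAB, hprojA, hAX, hXB⟩ := hSP X
    have hABtop : A ⊔ B = ⊤ := hAB.codisjoint.eq_top
    have hABbot : A ⊓ B = ⊥ := hAB.disjoint.eq_bot
    refine ⟨B, ?_, ?_, ?_, ?_⟩
    · -- B is projective
      refine Module.Projective.of_split B.subtype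
        (B.projectionOnto A hAB.symm) ?_
      ext x
      simp [Submodule.projectionOnto_apply_left hAB.symm x]
    · -- X ⊔ B = ⊤
      refine top_unique ?_
      rw [← hABtop]
      exact sup_le_sup_right hAX B
    · -- X ⊓ B ≤ I • B
      intro x hx
      obtain ⟨hxX, hxB⟩ := hx
      have hxI : x ∈ I := hXB ⟨hxX, hxB⟩
      obtain ⟨e, he, f, hf, hef⟩ := Submodule.mem_sup.1
        (show (1:R) ∈ A ⊔ B by rw [hABtop]; exact Submodule.mem_top)
      have hxf : x • f ∈ I • B := Submodule.smul_mem_smul hxI hf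
      have hxfB : x • f ∈ B := B.smul_mem x hf
      have hxe : x • e ∈ A := A.smul_mem x he
      have hsum : x • e + x • f = x := by
        rw [smul_eq_mul, smul_eq_mul, ← mul_add, hef, mul_one]
      have hxeB : x • e ∈ B := by
        have heq : x • e = x - x • f := eq_sub_of_add_eq hsum
        rw [heq]; exact sub_mem hxB hxfB
      have hxe0 : x • e = 0 := by
        have : x • e ∈ A ⊓ B := ⟨hxe, hxeB⟩
        rwa [hABbot, Submodule.mem_bot] at this
      rw [hxe0, zero_add] at hsum
      rw [← hsum]; exact hxf
    · -- DMIn R B (X ⊓ B)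
      intro W hWB hsupW
      have hXBI : X ⊓ B ≤ I • (⊤ : Submodule R R) := by
        rw [aux_smul_top I hI]; exact hXB
      have hsuptop : (X ⊓ B) ⊔ (W ⊔ A) = ⊤ := by
        rw [← sup_assoc, hsupW, sup_comm B A, hABtop]
      obtain ⟨S, hSle, ⟨S', hSS', hSd⟩, hSsup⟩ :=
        hDM R (X ⊓ B) hXBI (W ⊔ A) le_top hsuptop
      have hSB : S ≤ B := hSle.trans inf_le_right
      refine ⟨S, hSle, ⟨S' ⊓ B, ?_, ?_⟩, ?_⟩
      · rw [← sup_inf_assoc_of_le S' hSB, hSS', top_inf_eq]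
      · refine bot_unique ?_
        calc S ⊓ (S' ⊓ B) ≤ S ⊓ S' := inf_le_inf_left S inf_le_left
          _ = ⊥ := hSd
      · have h1 : S ⊔ W ≤ B := sup_le hSB hWB
        have h2 : ((S ⊔ W) ⊔ A) ⊓ B = (S ⊔ W) ⊔ (A ⊓ B) :=
          sup_inf_assoc_of_le A h1
        rw [hABbot, sup_bot_eq] at h2
        rw [← h2, sup_assoc, hSsup, top_inf_eq]
  · -- I-supplemented → I-semiperfect
    intro hSup K
    obtain ⟨Y, hYproj, hKY, hNIY, hDMY⟩ := hSup K
    -- f : Y → R/K, surjective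
    set f : ↥Y →ₗ[R] R ⧸ K := K.mkQ ∘ₗ Y.subtype with hf
    have hfs : Surjective f := by
      intro z
      obtain ⟨r, rfl⟩ := K.mkQ_surjective z
      have hr : r ∈ K ⊔ Y := by rw [hKY]; exact Submodule.mem_top
      obtain ⟨k, hk, y, hy, rfl⟩ := Submodule.mem_sup.1 hr
      refine ⟨⟨y, hy⟩, ?_⟩
      show K.mkQ y = K.mkQ (k + y)
      rw [Submodule.mkQ_apply, Submodule.mkQ_apply, Submodule.Quotient.eq]
      simpa using neg_mem hk
    obtain ⟨h, hh⟩ := Module.projective_lifting_property f K.mkQ hfs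
    have hhK : ∀ r : R, ((h r : ↥Y) : R) - r ∈ K := by
      intro r
      have : f (h r) = K.mkQ r := by rw [← hh]; rfl
      have h2 : K.mkQ ((h r : ↥Y) : R) = K.mkQ r := this
      rwa [Submodule.mkQ_apply, Submodule.mkQ_apply, Submodule.Quotient.eq] at h2
    set hR : Submodule R R := LinearMap.range (Y.subtype ∘ₗ h) with hhR
    have hRle : hR ≤ Y := by
      rintro _ ⟨r, rfl⟩
      exact (h r).2
    have hsupY : (K ⊓ Y) ⊔ hR = Y := by
      apply le_antisymm (sup_le inf_le_right hRle)
      intro y hy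
      have h1 : y - ((h y : ↥Y) : R) ∈ K := by
        have := hhK y
        simpa using neg_mem this
      have h2 : y - ((h y : ↥Y) : R) ∈ Y := sub_mem hy (h y).2
      exact Submodule.mem_sup.2 ⟨y - ((h y : ↥Y) : R), ⟨h1, h2⟩,
        ((h y : ↥Y) : R), ⟨y, rfl⟩, by abel⟩
    obtain ⟨S, hSle, ⟨S', hSS', hSd⟩, hSsup⟩ := hDMY hR hRle hsupY
    have hSY : S ≤ Y := hSle.trans inf_le_right
    have hS'Y : S' ≤ Y := le_sup_right.trans hSS'.le
    set S₀ : Submodule R ↥Y := S.comap Y.subtype with hS₀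
    set S₁ : Submodule R ↥Y := S'.comap Y.subtype with hS₁
    have hc : IsCompl S₁ S₀ := by
      constructor
      · rw [disjoint_iff, eq_bot_iff]
        rintro x ⟨hx1, hx0⟩
        have : (x : R) ∈ S ⊓ S' := ⟨hx0, hx1⟩
        rw [hSd, Submodule.mem_bot] at this
        have : x = 0 := Subtype.ext this
        simp [this]
      · rw [codisjoint_iff, eq_top_iff]
        intro x _
        have hx : (x : R) ∈ S ⊔ S' := by rw [hSS']; exact x.2
        obtain ⟨a, ha, b, hb, hab⟩ := Submodule.mem_sup.1 hx
        refine Submodule.mem_sup.2 ⟨⟨b, hS'Y hb⟩, hb, ⟨a, hSY ha⟩, ha, ?_⟩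
        apply Subtype.ext
        simp [← hab, add_comm]
    set π : ↥Y →ₗ[R] ↥S₁ := S₁.linearProjOfIsCompl S₀ hc with hπ
    set φ : R →ₗ[R] ↥S₁ := π ∘ₗ h with hφ
    have hφs : Surjective φ := by
      intro t
      have hts : ((t : ↥Y) : R) ∈ S ⊔ hR := by
        rw [hSsup]; exact (t : ↥Y).2
      obtain ⟨a, ha, b, hb, hab⟩ := Submodule.mem_sup.1 hts
      obtain ⟨r, hr⟩ := hb
      refine ⟨r, ?_⟩
      have hhr : h r = (t : ↥Y) - ⟨a, hSY ha⟩ := by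
        apply Subtype.ext
        show ((h r : ↥Y) : R) = ((t : ↥Y) : R) - a
        have : (Y.subtype ∘ₗ h) r = b := hr
        rw [show ((h r : ↥Y) : R) = b from this, ← hab]
        abel
      have hπa : π ⟨a, hSY ha⟩ = 0 :=
        Submodule.linearProjOfIsCompl_apply_right hc ⟨⟨a, hSY ha⟩, ha⟩
      have hπt : π (t : ↥Y) = t :=
        Submodule.linearProjOfIsCompl_apply_left hc t
      rw [hφ, LinearMap.comp_apply, hhr, map_sub, hπa, hπt, sub_zero]
    haveI : Module.Projective R ↥Y := hYproj
    have hS₁proj : Module.Projective R ↥S₁ :=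
      Module.Projective.of_split S₁.subtype π
        (LinearMap.ext fun x => Submodule.linearProjOfIsCompl_apply_left hc x)
    haveI := hS₁proj
    obtain ⟨s, hs⟩ := Module.projective_lifting_property φ
      (LinearMap.id : ↥S₁ →ₗ[R] ↥S₁) hφs
    have hsid : ∀ t : ↥S₁, φ (s t) = t := by
      intro t
      simpa using LinearMap.congr_fun hs t
    refine ⟨LinearMap.ker φ, LinearMap.range s, ?_, ?_, ?_, ?_⟩
    · -- IsCompl
      constructor
      · rw [disjoint_iff, eq_bot_iff]
        rintro x ⟨hxk, hxr⟩
        obtain ⟨t, rfl⟩ := hxr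
        have : φ (s t) = 0 := hxk
        rw [hsid t] at this
        simp [this]
      · rw [codisjoint_iff, eq_top_iff]
        intro r _
        have h1 : r - s (φ r) ∈ LinearMap.ker φ := by
          rw [LinearMap.mem_ker, map_sub, hsid (φ r), sub_self]
        refine Submodule.mem_sup.2 ⟨r - s (φ r), h1, s (φ r), ⟨φ r, rfl⟩, by abel⟩
    · -- ker φ projective
      have hcod : ∀ r : R, r - s (φ r) ∈ LinearMap.ker φ := by
        intro r
        rw [LinearMap.mem_ker, map_sub, hsid (φ r), sub_self]
      refine Module.Projective.of_split (LinearMap.ker φ).subtype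
        (LinearMap.codRestrict (LinearMap.ker φ)
          (LinearMap.id - s ∘ₗ φ) hcod) ?_
      ext x
      have hx : φ (x : R) = 0 := LinearMap.mem_ker.mp x.2
      simp [hx]
    · -- ker φ ≤ K
      intro a ha
      have hπha : π (h a) = 0 := by
        have h0 := LinearMap.mem_ker.mp ha
        rwa [hφ, LinearMap.comp_apply] at h0
      have hhaS : ((h a : ↥Y) : R) ∈ S := by
        have hmem : h a ∈ S₁ ⊔ S₀ := by
          rw [hc.codisjoint.eq_top]; exact Submodule.mem_top
        obtain ⟨u, hu, v, hv, huv⟩ := Submodule.mem_sup.1 hmem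
        have hπu : π u = ⟨u, hu⟩ :=
          Submodule.linearProjOfIsCompl_apply_left hc ⟨u, hu⟩
        have hπv : π v = 0 :=
          Submodule.linearProjOfIsCompl_apply_right hc ⟨v, hv⟩
        have : π (h a) = ⟨u, hu⟩ := by
          rw [← huv, map_add, hπu, hπv, add_zero]
        rw [hπha] at this
        have hu0 : u = 0 := by
          have := congrArg (Subtype.val) this.symm
          simpa using this
        have : h a = v := by rw [← huv, hu0, zero_add]
        rw [this]; exact hv
      have h1 : ((h a : ↥Y) : R) ∈ K := (hSle hhaS).1
      have h2 : ((h a : ↥Y) : R) - a ∈ K := hhK a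
      have : a = ((h a : ↥Y) : R) - (((h a : ↥Y) : R) - a) := by abel
      rw [this]
      exact sub_mem h1 h2
    · -- K ⊓ range s ≤ I
      intro b hb
      obtain ⟨hbK, t, ht⟩ := hb
      have hφb : φ b = t := by rw [← ht, hsid t]
      have hπhb : π (h b) = t := by rwa [hφ, LinearMap.comp_apply] at hφb
      have hbst : b = s (π (h b)) := by rw [hπhb]; exact ht.symm
      have hhbK : ((h b : ↥Y) : R) ∈ K := by
        have := hhK b
        have : ((h b : ↥Y) : R) = (((h b : ↥Y) : R) - b) + b := by abel
        rw [this]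
        exact add_mem (hhK b) hbK
      have hhbIY : ((h b : ↥Y) : R) ∈ I • Y := hNIY ⟨hhbK, (h b).2⟩
      have hmapIY : I • Y = Submodule.map Y.subtype (I • (⊤ : Submodule R ↥Y)) := by
        rw [Submodule.map_smul'', Submodule.map_top, Submodule.range_subtype]
      have hhbI : h b ∈ I • (⊤ : Submodule R ↥Y) := by
        rw [hmapIY] at hhbIY
        obtain ⟨z, hz, hze⟩ := hhbIY
        have : z = h b := Subtype.ext hze
        rwa [← this]
      have hbmem : b ∈ Submodule.map (s ∘ₗ π) (I • (⊤ : Submodule R ↥Y)) :=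
        ⟨h b, hhbI, by rw [LinearMap.comp_apply]; exact hbst.symm⟩
      rw [Submodule.map_smul''] at hbmem
      have : b ∈ I • (⊤ : Submodule R R) :=
        Submodule.smul_mono (le_refl I) le_top hbmem
      rwa [aux_smul_top I hI] at this
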